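/- There exists a constant C > 0 such that the following holds. Let A > 0 and let U : ℝ³ ∖ {x' = 0} → ℝ³ be a continuously differentiable vector field whose derivative satisfies |∇U(x)| ≤ A / (|x| |x'|) for all x with x' ≠ 0. Then for all continuously differentiable, compactly supported vector fields v, w : ℝ³ → ℝ³, |∫_{ℝ³} ((v(x) · ∇)U(x)) · w(x) dx| ≤ C A (∫_{ℝ³} |∇v|² dx)^{1/2} (∫_{ℝ³} |∇w|² dx)^{1/2}. -/

import Mathlib

open MeasureTheory

/-- The Euclidean norm of `x' = (x₁, x₂)`, the first two coordinates of `x ∈ ℝ³`. -/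
noncomputable def primeNorm3 (x : EuclideanSpace ℝ (Fin 3)) : ℝ :=
  Real.sqrt (x 0 ^ 2 + x 1 ^ 2)

/-- The Hilbert–Schmidt (Frobenius) norm of the Jacobian of `v` at `x`. -/
noncomputable def hsNorm (v : EuclideanSpace ℝ (Fin 3) → EuclideanSpace ℝ (Fin 3))
    (x : EuclideanSpace ℝ (Fin 3)) : ℝ :=
  Real.sqrt (∑ i : Fin 3, ∑ j : Fin 3, (fderiv ℝ v x (EuclideanSpace.single j 1) i) ^ 2)

noncomputable section Stmt3Aux

namespace Stmt3Aux

abbrev E3 := EuclideanSpace ℝ (Fin 3)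

/-- regularized quadratic form with weights `κ`. -/
def Pf (κ : Fin 3 → ℝ) (ε : ℝ) : E3 → ℝ := fun y => (∑ i, κ i * y i ^ 2) + ε ^ 2

/-- regularized weight `a = (√Q √P)⁻¹` where `Q = Pf 1 ε`. -/
def af (κ : Fin 3 → ℝ) (ε : ℝ) : E3 → ℝ :=
  fun y => (Real.sqrt (Pf 1 ε y) * Real.sqrt (Pf κ ε y))⁻¹

lemma kappa_nonneg {κ : Fin 3 → ℝ} (hκ : ∀ i, κ i = 0 ∨ κ i = 1) (i : Fin 3) : 0 ≤ κ i := by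
  rcases hκ i with h | h <;> rw [h] <;> norm_num

lemma kappa_le_one {κ : Fin 3 → ℝ} (hκ : ∀ i, κ i = 0 ∨ κ i = 1) (i : Fin 3) : κ i ≤ 1 := by
  rcases hκ i with h | h <;> rw [h] <;> norm_num

lemma Pf_pos {κ : Fin 3 → ℝ} {ε : ℝ} (hε : 0 < ε) (hκ : ∀ i, κ i = 0 ∨ κ i = 1) (y : E3) :
    0 < Pf κ ε y := by
  have h1 : (0:ℝ) ≤ ∑ i, κ i * y i ^ 2 := by
    apply Finset.sum_nonneg
    intro i _
    exact mul_nonneg (kappa_nonneg hκ i) (sq_nonneg _)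
  have h2 := pow_pos hε 2
  unfold Pf; linarith

lemma one_mem : ∀ i : Fin 3, (1 : Fin 3 → ℝ) i = 0 ∨ (1 : Fin 3 → ℝ) i = 1 := fun _ => Or.inr rfl

lemma Pf_cont (κ : Fin 3 → ℝ) (ε : ℝ) : Continuous (Pf κ ε) := by
  unfold Pf
  exact (continuous_finset_sum _ fun i _ =>
    (continuous_const.mul (((EuclideanSpace.proj i (𝕜 := ℝ)).continuous).pow 2))).add
    continuous_const

lemma af_pos {κ : Fin 3 → ℝ} {ε : ℝ} (hε : 0 < ε) (hκ : ∀ i, κ i = 0 ∨ κ i = 1) (y : E3) :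
    0 < af κ ε y := by
  have h1 := Pf_pos hε one_mem y
  have h2 := Pf_pos hε hκ y
  unfold af; positivity

lemma af_cont {κ : Fin 3 → ℝ} {ε : ℝ} (hε : 0 < ε) (hκ : ∀ i, κ i = 0 ∨ κ i = 1) :
    Continuous (af κ ε) := by
  unfold af
  apply Continuous.inv₀
  · exact ((Pf_cont 1 ε).sqrt).mul ((Pf_cont κ ε).sqrt)
  · intro y
    have h1 := Pf_pos hε one_mem y
    have h2 := Pf_pos hε hκ y
    positivity

lemma hasFDerivAt_sumsq (κ : Fin 3 → ℝ) (ε : ℝ) (x : E3) :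
    HasFDerivAt (Pf κ ε)
      (∑ i, (2 * κ i * x i) • (EuclideanSpace.proj i (𝕜 := ℝ))) x := by
  have h : ∀ i : Fin 3, HasFDerivAt (fun y : E3 => κ i * y i ^ 2)
      ((2 * κ i * x i) • (EuclideanSpace.proj i (𝕜 := ℝ))) x := by
    intro i
    have hp : HasFDerivAt (fun y : E3 => y i) (EuclideanSpace.proj i (𝕜 := ℝ)) x :=
      (EuclideanSpace.proj i (𝕜 := ℝ)).hasFDerivAt
    have h2 := (hp.mul hp).const_mul (κ i)
    exact (h2.congr_fderiv (by
      ext u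
      simp only [ContinuousLinearMap.smul_apply, ContinuousLinearMap.add_apply, smul_eq_mul]
      ring)).congr_of_eventuallyEq
      (Filter.Eventually.of_forall fun y => by simp only [Pi.mul_apply]; ring)
  exact (HasFDerivAt.fun_sum (fun i (_ : i ∈ Finset.univ) => h i)).add_const (ε ^ 2)

lemma hasFDerivAt_sqrtPf {κ : Fin 3 → ℝ} {ε : ℝ} (hε : 0 < ε) (hκ : ∀ i, κ i = 0 ∨ κ i = 1)
    (x : E3) :
    HasFDerivAt (fun y => Real.sqrt (Pf κ ε y))
      ((1 / (2 * Real.sqrt (Pf κ ε x))) •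
        (∑ i, (2 * κ i * x i) • (EuclideanSpace.proj i (𝕜 := ℝ)))) x :=
  (Real.hasDerivAt_sqrt (Pf_pos hε hκ x).ne').comp_hasFDerivAt x (hasFDerivAt_sumsq κ ε x)

/-- The divergence-summand function. -/
def phif (κ : Fin 3 → ℝ) (ε : ℝ) (j : Fin 3) : E3 → ℝ := fun x =>
  κ j * af κ ε x - af κ ε x * ((κ j * x j) ^ 2 / Pf κ ε x + κ j * x j ^ 2 / Pf 1 ε x)

lemma phif_cont {κ : Fin 3 → ℝ} {ε : ℝ} (hε : 0 < ε) (hκ : ∀ i, κ i = 0 ∨ κ i = 1) (j : Fin 3) :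
    Continuous (phif κ ε j) := by
  have ha := af_cont hε hκ
  have h1 : Continuous fun x : E3 => (κ j * x j) ^ 2 / Pf κ ε x :=
    ((continuous_const.mul (EuclideanSpace.proj j (𝕜 := ℝ)).continuous).pow 2).div
      (Pf_cont κ ε) (fun y => (Pf_pos hε hκ y).ne')
  have h2 : Continuous fun x : E3 => κ j * x j ^ 2 / Pf 1 ε x :=
    (continuous_const.mul ((EuclideanSpace.proj j (𝕜 := ℝ)).continuous.pow 2)).div
      (Pf_cont 1 ε) (fun y => (Pf_pos hε one_mem y).ne')
  exact (continuous_const.mul ha).sub (ha.mul (h1.add h2))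

lemma diff_Y {κ : Fin 3 → ℝ} {ε : ℝ} (hε : 0 < ε) (hκ : ∀ i, κ i = 0 ∨ κ i = 1) (j : Fin 3) :
    Differentiable ℝ (fun y : E3 => κ j * y j * af κ ε y) := by
  intro x
  have hQ := hasFDerivAt_sqrtPf hε one_mem x
  have hP := hasFDerivAt_sqrtPf hε hκ x
  have hb0 : Real.sqrt (Pf 1 ε x) * Real.sqrt (Pf κ ε x) ≠ 0 := by
    have h1 := Pf_pos hε one_mem x
    have h2 := Pf_pos hε hκ x
    positivity
  have ha : HasFDerivAt (af κ ε) _ x := (hasDerivAt_inv hb0).comp_hasFDerivAt x (hQ.mul hP)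
  have hp : HasFDerivAt (fun y : E3 => κ j * y j)
      ((κ j) • (EuclideanSpace.proj j (𝕜 := ℝ))) x := by
    simpa using ((EuclideanSpace.proj j (𝕜 := ℝ)).hasFDerivAt.const_mul (κ j))
  exact (hp.mul ha).differentiableAt

lemma fderiv_Y_eval {κ : Fin 3 → ℝ} {ε : ℝ} (hε : 0 < ε) (hκ : ∀ i, κ i = 0 ∨ κ i = 1)
    (x : E3) (j : Fin 3) :
    fderiv ℝ (fun y : E3 => κ j * y j * af κ ε y) x (EuclideanSpace.single j 1)
      = phif κ ε j x := by
  have hQ := hasFDerivAt_sqrtPf hε one_mem x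
  have hP := hasFDerivAt_sqrtPf hε hκ x
  have hQ0 := Pf_pos hε one_mem x
  have hP0 := Pf_pos hε hκ x
  have hb0 : Real.sqrt (Pf 1 ε x) * Real.sqrt (Pf κ ε x) ≠ 0 := by positivity
  have ha : HasFDerivAt (af κ ε) _ x := (hasDerivAt_inv hb0).comp_hasFDerivAt x (hQ.mul hP)
  have hp : HasFDerivAt (fun y : E3 => κ j * y j)
      ((κ j) • (EuclideanSpace.proj j (𝕜 := ℝ))) x := by
    simpa using ((EuclideanSpace.proj j (𝕜 := ℝ)).hasFDerivAt.const_mul (κ j))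
  have hY := hp.mul ha
  rw [show (fun y : E3 => κ j * y j * af κ ε y) = (fun y => κ j * y j) * af κ ε from rfl, hY.fderiv]
  unfold phif
  simp [EuclideanSpace.single_apply, af, Finset.mul_sum]
  generalize hgq : Real.sqrt (Pf 1 ε x) = sq
  generalize hgp : Real.sqrt (Pf κ ε x) = sp
  have hsq : sq ^ 2 = Pf 1 ε x := by rw [← hgq]; exact Real.sq_sqrt hQ0.le
  have hsp : sp ^ 2 = Pf κ ε x := by rw [← hgp]; exact Real.sq_sqrt hP0.le
  have hsq0 : sq ≠ 0 := by rw [← hgq]; positivity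
  have hsp0 : sp ≠ 0 := by rw [← hgp]; positivity
  rw [← hsq, ← hsp]
  field_simp
  ring


lemma cont_fderiv_apply {f : E3 → ℝ} (hf : ContDiff ℝ 1 f) (u : E3) :
    Continuous fun x => fderiv ℝ f x u :=
  (hf.continuous_fderiv one_ne_zero).clm_apply continuous_const

lemma hcs_fderiv_apply {f : E3 → ℝ} (hfc : HasCompactSupport f) (u : E3) :
    HasCompactSupport fun x => fderiv ℝ f x u :=
  (hfc.fderiv ℝ).comp_left (g := fun L : E3 →L[ℝ] ℝ => L u) rfl

/-- Integration by parts step: `∫ f² ∂ⱼYⱼ = -∫ ∂ⱼ(f²) Yⱼ`. -/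
lemma ibp_step {κ : Fin 3 → ℝ} {ε : ℝ} (hε : 0 < ε) (hκ : ∀ i, κ i = 0 ∨ κ i = 1)
    {f : E3 → ℝ} (hf : ContDiff ℝ 1 f) (hfc : HasCompactSupport f) (j : Fin 3) :
    ∫ x, f x ^ 2 * phif κ ε j x
      = -∫ x, (2 * f x * fderiv ℝ f x (EuclideanSpace.single j 1)) * (κ j * x j * af κ ε x) := by
  have hf2 : ContDiff ℝ 1 (fun x => f x ^ 2) := by
    have := hf.mul hf
    simpa [pow_two] using this
  have hf2c : HasCompactSupport (fun x => f x ^ 2) := by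
    have := hfc.mul_right (f' := f)
    simpa [pow_two, Pi.mul_def] using this
  have hYc : Continuous fun x : E3 => κ j * x j * af κ ε x :=
    (continuous_const.mul (EuclideanSpace.proj j (𝕜 := ℝ)).continuous).mul (af_cont hε hκ)
  have hYd := diff_Y hε hκ j
  have hfd : Differentiable ℝ f := hf.differentiable one_ne_zero
  -- rewrite `fderiv (f²)` as `2 f ∂f`
  have hdf2 : ∀ x, fderiv ℝ (fun y => f y ^ 2) x (EuclideanSpace.single j 1)
      = 2 * f x * fderiv ℝ f x (EuclideanSpace.single j 1) := by
    intro x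
    have h1 : HasFDerivAt (fun y => f y * f y)
        (f x • fderiv ℝ f x + f x • fderiv ℝ f x) x :=
      (hfd x).hasFDerivAt.mul (hfd x).hasFDerivAt
    have h2 : HasFDerivAt (fun y => f y ^ 2)
        (f x • fderiv ℝ f x + f x • fderiv ℝ f x) x := by
      convert h1 using 1; ext y; ring
    rw [h2.fderiv]
    simp; ring
  have hdY : ∀ x, fderiv ℝ (fun y : E3 => κ j * y j * af κ ε y) x (EuclideanSpace.single j 1)
      = phif κ ε j x := fun x => fderiv_Y_eval hε hκ x j
  have key := integral_mul_fderiv_eq_neg_fderiv_mul_of_integrable (μ := volume)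
    (f := fun x => f x ^ 2) (g := fun y : E3 => κ j * y j * af κ ε y)
    (v := EuclideanSpace.single j 1) ?_ ?_ ?_ (fun x _ => hf2.differentiable one_ne_zero x) (fun x _ => hYd x)
  · calc ∫ x, f x ^ 2 * phif κ ε j x
        = ∫ x, f x ^ 2 * fderiv ℝ (fun y : E3 => κ j * y j * af κ ε y) x
            (EuclideanSpace.single j 1) := by
          congr 1; ext x; rw [hdY x]
      _ = -∫ x, fderiv ℝ (fun y => f y ^ 2) x (EuclideanSpace.single j 1)
            * (κ j * x j * af κ ε x) := key
      _ = -∫ x, (2 * f x * fderiv ℝ f x (EuclideanSpace.single j 1))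
            * (κ j * x j * af κ ε x) := by
          congr 1; apply integral_congr_ae; filter_upwards with x; rw [hdf2 x]
  · -- Integrable fderiv(f²) * Y
    apply Continuous.integrable_of_hasCompactSupport
    · exact (cont_fderiv_apply hf2 _).mul hYc
    · exact ((hcs_fderiv_apply hf2c _).mul_right)
  · -- Integrable f² * fderiv Y
    have : (fun x => f x ^ 2 * fderiv ℝ (fun y : E3 => κ j * y j * af κ ε y) x
        (EuclideanSpace.single j 1)) = fun x => f x ^ 2 * phif κ ε j x := by
      ext x; rw [hdY x]
    rw [this]
    apply Continuous.integrable_of_hasCompactSupport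
    · exact (hf2.continuous).mul (phif_cont hε hκ j)
    · exact hf2c.mul_right
  · apply Continuous.integrable_of_hasCompactSupport
    · exact (hf2.continuous).mul hYc
    · exact hf2c.mul_right

/-- Cauchy–Schwarz for integrals of products of nonnegative functions. -/
lemma csInt {f g : E3 → ℝ} (hf : Continuous f) (hg : Continuous g)
    (hfc : HasCompactSupport f) (hgc : HasCompactSupport g)
    (hf0 : ∀ x, 0 ≤ f x) (hg0 : ∀ x, 0 ≤ g x) :
    ∫ x, f x * g x ≤ Real.sqrt (∫ x, f x ^ 2) * Real.sqrt (∫ x, g x ^ 2) := by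
  have hpq : Real.HolderConjugate 2 2 := Real.HolderConjugate.two_two
  have hmf : MemLp f (ENNReal.ofReal 2) volume := hf.memLp_of_hasCompactSupport (μ := volume) hfc
  have hmg : MemLp g (ENNReal.ofReal 2) volume := hg.memLp_of_hasCompactSupport (μ := volume) hgc
  have h := integral_mul_norm_le_Lp_mul_Lq (μ := volume) hpq hmf hmg
  calc ∫ x, f x * g x = ∫ x, ‖f x‖ * ‖g x‖ := by
        congr 1; ext x; rw [Real.norm_of_nonneg (hf0 x), Real.norm_of_nonneg (hg0 x)]
    _ ≤ (∫ x, ‖f x‖ ^ (2:ℝ)) ^ ((1:ℝ)/2) * (∫ x, ‖g x‖ ^ (2:ℝ)) ^ ((1:ℝ)/2) := h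
    _ = Real.sqrt (∫ x, f x ^ 2) * Real.sqrt (∫ x, g x ^ 2) := by
        rw [Real.sqrt_eq_rpow, Real.sqrt_eq_rpow]
        congr 2
        · congr 1; ext x
          rw [Real.norm_of_nonneg (hf0 x), ← Real.rpow_natCast (f x) 2]; norm_num
        · congr 1; ext x
          rw [Real.norm_of_nonneg (hg0 x), ← Real.rpow_natCast (g x) 2]; norm_num


/-- The key differential inequality, integrated. -/
lemma key {κ : Fin 3 → ℝ} {ε : ℝ} (hε : 0 < ε) (hκ : ∀ i, κ i = 0 ∨ κ i = 1)
    {f : E3 → ℝ} (hf : ContDiff ℝ 1 f) (hfc : HasCompactSupport f) :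
    ((∑ i, κ i) - 1) * (∫ x, f x ^ 2 * af κ ε x)
      ≤ (∫ x, f x ^ 2 * (Pf 1 ε x)⁻¹)
        + 2 * Real.sqrt (∫ x, f x ^ 2 * (Pf 1 ε x)⁻¹)
            * Real.sqrt (∫ x, ∑ j, (fderiv ℝ f x (EuclideanSpace.single j 1)) ^ 2) := by
  classical
  set s : ℝ := ∑ i, κ i with hs
  have hk2 : ∀ j, κ j ^ 2 = κ j := by
    intro j; rcases hκ j with h | h <;> rw [h] <;> norm_num
  set g : Fin 3 → E3 → ℝ := fun j x => fderiv ℝ f x (EuclideanSpace.single j 1) with hg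
  have hgcont : ∀ j, Continuous (g j) := fun j => cont_fderiv_apply hf _
  have hgcs : ∀ j, HasCompactSupport (g j) := fun j => hcs_fderiv_apply hfc _
  set F : E3 → ℝ := fun x => |f x| * (Real.sqrt (Pf 1 ε x))⁻¹ with hF
  set Gn : E3 → ℝ := fun x => Real.sqrt (∑ j, g j x ^ 2) with hGn
  have hQ0 : ∀ x, 0 < Pf 1 ε x := Pf_pos hε one_mem
  have hP0 : ∀ x, 0 < Pf κ ε x := Pf_pos hε hκ
  have ha0 : ∀ x, 0 < af κ ε x := af_pos hε hκ
  have hFcont : Continuous F :=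
    (hf.continuous.abs).mul (((Pf_cont 1 ε).sqrt).inv₀
      (fun x => by have := Pf_pos hε one_mem x; positivity))
  have hFcs : HasCompactSupport F := (hfc.abs).mul_right
  have hGcont : Continuous Gn :=
    (continuous_finset_sum _ fun j _ => (hgcont j).pow 2).sqrt
  have hGcs : HasCompactSupport Gn := by
    have hsq : ∀ j : Fin 3, HasCompactSupport fun x => g j x ^ 2 := by
      intro j
      have := (hgcs j).mul_right (f' := g j)
      simpa [pow_two, Pi.mul_def] using this
    have h1 : HasCompactSupport fun x => ∑ j, g j x ^ 2 := by
      have e : (fun x => ∑ j : Fin 3, g j x ^ 2)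
          = fun x => g 0 x ^ 2 + g 1 x ^ 2 + g 2 x ^ 2 := by
        ext x; rw [Fin.sum_univ_three]
      rw [e]
      exact ((hsq 0).add (hsq 1)).add (hsq 2)
    exact h1.comp_left (g := Real.sqrt) Real.sqrt_zero
  -- pointwise divergence lower bound
  have step0 : ∀ x, (s - 1) * (f x ^ 2 * af κ ε x) - f x ^ 2 * (Pf 1 ε x)⁻¹
      ≤ f x ^ 2 * (∑ j, phif κ ε j x) := by
    intro x
    set a := af κ ε x with hadef
    set Q := Pf 1 ε x with hQdef
    set P := Pf κ ε x with hPdef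
    set ρ2 : ℝ := ∑ j, κ j * x j ^ 2 with hρ
    have hsum : ∑ j, phif κ ε j x = s * a - a * ρ2 / P - a * ρ2 / Q := by
      have h1 : ∀ j ∈ Finset.univ, phif κ ε j x
          = κ j * a - (a / P) * (κ j * x j ^ 2) - (a / Q) * (κ j * x j ^ 2) := by
        intro j _
        unfold phif
        rw [← hadef, ← hQdef, ← hPdef]
        rcases hκ j with h | h <;> rw [h] <;> ring
      rw [Finset.sum_congr rfl h1]
      rw [Finset.sum_sub_distrib, Finset.sum_sub_distrib, ← Finset.mul_sum, ← Finset.mul_sum,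
        ← Finset.sum_mul, ← hρ, ← hs]
      ring
    have hρP : ρ2 ≤ P := by
      have : P = ρ2 + ε ^ 2 := rfl
      nlinarith [sq_nonneg ε]
    have hρ0 : 0 ≤ ρ2 := by
      apply Finset.sum_nonneg; intro j _; exact mul_nonneg (kappa_nonneg hκ j) (sq_nonneg _)
    have hρQ : ρ2 ≤ Q := by
      have h1 : ρ2 ≤ ∑ j, x j ^ 2 := by
        apply Finset.sum_le_sum; intro j _
        exact mul_le_of_le_one_left (sq_nonneg _) (kappa_le_one hκ j)
      have h2 : Q = (∑ j, (1:ℝ) * x j ^ 2) + ε ^ 2 := rfl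
      simp only [one_mul] at h2
      nlinarith [sq_nonneg ε]
    have haρ : a * ρ2 ≤ 1 := by
      have h1 : ρ2 * ρ2 ≤ Q * P := mul_le_mul hρQ hρP hρ0 (hQ0 x).le
      have h2 : ρ2 ≤ Real.sqrt Q * Real.sqrt P := by
        rw [← Real.sqrt_mul_self hρ0, ← Real.sqrt_mul (hQ0 x).le]
        exact Real.sqrt_le_sqrt h1
      have h3 : 0 < Real.sqrt Q * Real.sqrt P := by
        have := hQ0 x; have := hP0 x; positivity
      have : a = (Real.sqrt Q * Real.sqrt P)⁻¹ := rfl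
      rw [this, inv_mul_le_iff₀ h3]
      simpa using h2
    have hdiv : (s - 1) * a - Q⁻¹ ≤ ∑ j, phif κ ε j x := by
      rw [hsum]
      have e1 : a * ρ2 / P ≤ a := by
        rw [div_le_iff₀ (hP0 x)]
        nlinarith [(ha0 x).le]
      have e2 : a * ρ2 / Q ≤ Q⁻¹ := by
        rw [div_le_iff₀ (hQ0 x), inv_mul_cancel₀ (hQ0 x).ne']
        exact haρ
      linarith
    nlinarith [sq_nonneg (f x), hdiv]
  -- pointwise bound on the boundary term
  have step2 : ∀ x, -(∑ j, (2 * f x * g j x) * (κ j * x j * af κ ε x)) ≤ 2 * (F x * Gn x) := by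
    intro x
    have hfac : ∑ j, (2 * f x * g j x) * (κ j * x j * af κ ε x)
        = (2 * f x * af κ ε x) * ∑ j, κ j * x j * g j x := by
      rw [Finset.mul_sum]
      apply Finset.sum_congr rfl
      intro j _; ring
    have hcs2 : |∑ j, κ j * x j * g j x| ≤ Real.sqrt (Pf κ ε x) * Gn x := by
      have h1 : (∑ j, (κ j * x j) * g j x) ^ 2 ≤ (∑ j, (κ j * x j) ^ 2) * ∑ j, g j x ^ 2 :=
        Finset.sum_mul_sq_le_sq_mul_sq _ _ _
      have h2 : ∑ j, (κ j * x j) ^ 2 ≤ Pf κ ε x := by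
        have e : ∀ j ∈ Finset.univ, (κ j * x j) ^ 2 = κ j * x j ^ 2 := by
          intro j _; rw [mul_pow, hk2 j]
        rw [Finset.sum_congr rfl e]
        have : Pf κ ε x = (∑ j, κ j * x j ^ 2) + ε ^ 2 := rfl
        nlinarith [sq_nonneg ε]
      have h3 : (∑ j, κ j * x j * g j x) ^ 2 ≤ Pf κ ε x * (∑ j, g j x ^ 2) := by
        have hgn : (0:ℝ) ≤ ∑ j, g j x ^ 2 :=
          Finset.sum_nonneg fun j _ => sq_nonneg _
        calc (∑ j, κ j * x j * g j x) ^ 2 ≤ (∑ j, (κ j * x j) ^ 2) * ∑ j, g j x ^ 2 := h1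
          _ ≤ Pf κ ε x * ∑ j, g j x ^ 2 := by
              exact mul_le_mul_of_nonneg_right h2 hgn
      calc |∑ j, κ j * x j * g j x| = Real.sqrt ((∑ j, κ j * x j * g j x) ^ 2) :=
            (Real.sqrt_sq_eq_abs _).symm
        _ ≤ Real.sqrt (Pf κ ε x * (∑ j, g j x ^ 2)) := Real.sqrt_le_sqrt h3
        _ = Real.sqrt (Pf κ ε x) * Gn x := Real.sqrt_mul (hP0 x).le _
    calc -(∑ j, (2 * f x * g j x) * (κ j * x j * af κ ε x))
        ≤ |∑ j, (2 * f x * g j x) * (κ j * x j * af κ ε x)| := neg_le_abs _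
      _ = 2 * |f x| * af κ ε x * |∑ j, κ j * x j * g j x| := by
          rw [hfac, abs_mul, abs_mul, abs_mul]
          rw [abs_of_nonneg (ha0 x).le, abs_two]
          try ring
      _ ≤ 2 * |f x| * af κ ε x * (Real.sqrt (Pf κ ε x) * Gn x) := by
          have h0 : (0:ℝ) ≤ 2 * |f x| * af κ ε x := by
            have := (ha0 x).le; positivity
          exact mul_le_mul_of_nonneg_left hcs2 h0
      _ = 2 * (F x * Gn x) := by
          have e : af κ ε x * Real.sqrt (Pf κ ε x) = (Real.sqrt (Pf 1 ε x))⁻¹ := by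
            have h1 : Real.sqrt (Pf κ ε x) ≠ 0 := by have := hP0 x; positivity
            have h2 : Real.sqrt (Pf 1 ε x) ≠ 0 := by have := hQ0 x; positivity
            unfold af
            field_simp
          rw [hF]
          calc 2 * |f x| * af κ ε x * (Real.sqrt (Pf κ ε x) * Gn x)
              = 2 * (|f x| * (af κ ε x * Real.sqrt (Pf κ ε x)) * Gn x) := by ring
            _ = 2 * (|f x| * (Real.sqrt (Pf 1 ε x))⁻¹ * Gn x) := by rw [e]
  -- integrability facts
  have hf2cont : Continuous fun x => f x ^ 2 := hf.continuous.pow 2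
  have hf2cs : HasCompactSupport fun x => f x ^ 2 := by
    have := hfc.mul_right (f' := f); simpa [pow_two, Pi.mul_def] using this
  have int_a : Integrable (fun x => f x ^ 2 * af κ ε x) volume :=
    (hf2cont.mul (af_cont hε hκ)).integrable_of_hasCompactSupport hf2cs.mul_right
  have int_Q : Integrable (fun x => f x ^ 2 * (Pf 1 ε x)⁻¹) volume :=
    (hf2cont.mul ((Pf_cont 1 ε).inv₀ fun x => (hQ0 x).ne')).integrable_of_hasCompactSupport
      hf2cs.mul_right
  have int_phi : ∀ j, Integrable (fun x => f x ^ 2 * phif κ ε j x) volume := fun j =>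
    (hf2cont.mul (phif_cont hε hκ j)).integrable_of_hasCompactSupport hf2cs.mul_right
  have int_sumphi : Integrable (fun x => f x ^ 2 * ∑ j, phif κ ε j x) volume :=
    (hf2cont.mul (continuous_finset_sum _ fun j _ => phif_cont hε hκ j)).integrable_of_hasCompactSupport
      hf2cs.mul_right
  have int_bj : ∀ j, Integrable
      (fun x => (2 * f x * g j x) * (κ j * x j * af κ ε x)) volume := by
    intro j
    apply Continuous.integrable_of_hasCompactSupport
    · exact ((continuous_const.mul hf.continuous).mul (hgcont j)).mul
        ((continuous_const.mul (EuclideanSpace.proj j (𝕜 := ℝ)).continuous).mul (af_cont hε hκ))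
    · apply HasCompactSupport.mul_right
      apply HasCompactSupport.mul_left
      exact hgcs j
  have int_bsum : Integrable (fun x => ∑ j, (2 * f x * g j x) * (κ j * x j * af κ ε x)) volume :=
    integrable_finset_sum _ fun j _ => int_bj j
  have int_FG : Integrable (fun x => 2 * (F x * Gn x)) volume := by
    apply Continuous.integrable_of_hasCompactSupport
    · exact continuous_const.mul (hFcont.mul hGcont)
    · exact (hFcs.mul_right).mul_left
  -- the main chain
  have csFG : ∫ x, F x * Gn x
      ≤ Real.sqrt (∫ x, F x ^ 2) * Real.sqrt (∫ x, Gn x ^ 2) :=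
    csInt hFcont hGcont hFcs hGcs (fun x => by positivity) (fun x => Real.sqrt_nonneg _)
  have hF2 : (∫ x, F x ^ 2) = ∫ x, f x ^ 2 * (Pf 1 ε x)⁻¹ := by
    congr 1; ext x
    rw [hF]
    rw [mul_pow, sq_abs, inv_pow, Real.sq_sqrt (hQ0 x).le]
  have hG2 : (∫ x, Gn x ^ 2) = ∫ x, ∑ j, g j x ^ 2 := by
    congr 1; ext x
    rw [hGn]
    exact Real.sq_sqrt (Finset.sum_nonneg fun j _ => sq_nonneg _)
  calc (s - 1) * (∫ x, f x ^ 2 * af κ ε x)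
      = (∫ x, (s - 1) * (f x ^ 2 * af κ ε x)) := (integral_const_mul _ _).symm
    _ ≤ (∫ x, f x ^ 2 * (Pf 1 ε x)⁻¹) + ∫ x, f x ^ 2 * ∑ j, phif κ ε j x := by
        have h := integral_mono (f := fun x => (s - 1) * (f x ^ 2 * af κ ε x)
            - f x ^ 2 * (Pf 1 ε x)⁻¹)
          (g := fun x => f x ^ 2 * ∑ j, phif κ ε j x)
          ((int_a.const_mul _).sub int_Q) int_sumphi (fun x => step0 x)
        rw [integral_sub (int_a.const_mul _) int_Q, integral_const_mul] at h
        rw [integral_const_mul]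
        linarith
    _ = (∫ x, f x ^ 2 * (Pf 1 ε x)⁻¹)
        + ∑ j, ∫ x, f x ^ 2 * phif κ ε j x := by
        congr 1
        rw [← integral_finset_sum _ fun j _ => int_phi j]
        congr 1; ext x; rw [Finset.mul_sum]
    _ = (∫ x, f x ^ 2 * (Pf 1 ε x)⁻¹)
        + ∫ x, -(∑ j, (2 * f x * g j x) * (κ j * x j * af κ ε x)) := by
        congr 1
        have e1 : (∫ x, -(∑ j, (2 * f x * g j x) * (κ j * x j * af κ ε x)))
            = -∫ x, ∑ j, (2 * f x * g j x) * (κ j * x j * af κ ε x) := integral_neg _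
        rw [e1, integral_finset_sum _ fun j _ => int_bj j, ← Finset.sum_neg_distrib]
        apply Finset.sum_congr rfl
        intro j _
        exact ibp_step hε hκ hf hfc j
    _ ≤ (∫ x, f x ^ 2 * (Pf 1 ε x)⁻¹) + ∫ x, 2 * (F x * Gn x) := by
        have h := integral_mono
          (f := fun x => -(∑ j, (2 * f x * g j x) * (κ j * x j * af κ ε x)))
          (g := fun x => 2 * (F x * Gn x)) int_bsum.neg int_FG step2
        have h2 : (∫ x, -(∑ j, (2 * f x * g j x) * (κ j * x j * af κ ε x)))
            = -∫ x, ∑ j, (2 * f x * g j x) * (κ j * x j * af κ ε x) := integral_neg _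
        rw [h2] at h ⊢
        linarith
    _ ≤ (∫ x, f x ^ 2 * (Pf 1 ε x)⁻¹)
        + 2 * Real.sqrt (∫ x, f x ^ 2 * (Pf 1 ε x)⁻¹)
            * Real.sqrt (∫ x, ∑ j, (fderiv ℝ f x (EuclideanSpace.single j 1)) ^ 2) := by
        have h1 : ∫ x, 2 * (F x * Gn x) = 2 * ∫ x, F x * Gn x := integral_const_mul _ _
        have h2 := csFG
        rw [hF2, hG2] at h2
        rw [h1]
        have : (0:ℝ) ≤ 2 := by norm_num
        nlinarith [Real.sqrt_nonneg (∫ x, f x ^ 2 * (Pf 1 ε x)⁻¹),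
          Real.sqrt_nonneg (∫ x, ∑ j, g j x ^ 2)]


/-- The mixed weight vector. -/
def km : Fin 3 → ℝ := fun i => if (i : ℕ) < 2 then 1 else 0

lemma km_mem : ∀ i : Fin 3, km i = 0 ∨ km i = 1 := by
  intro i
  unfold km
  by_cases h : (i : ℕ) < 2
  · right; rw [if_pos h]
  · left; rw [if_neg h]

lemma integral_gradsq_nonneg (f : E3 → ℝ) :
    0 ≤ ∫ x, ∑ j, (fderiv ℝ f x (EuclideanSpace.single j 1)) ^ 2 :=
  integral_nonneg fun x => Finset.sum_nonneg fun j _ => sq_nonneg _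

lemma af_one_eq {ε : ℝ} (hε : 0 < ε) : af 1 ε = fun x => (Pf 1 ε x)⁻¹ := by
  ext x
  unfold af
  rw [Real.mul_self_sqrt (Pf_pos hε one_mem x).le]

lemma H_nonneg {ε : ℝ} (hε : 0 < ε) (f : E3 → ℝ) :
    0 ≤ ∫ x, f x ^ 2 * (Pf 1 ε x)⁻¹ :=
  integral_nonneg fun x => mul_nonneg (sq_nonneg _) (inv_nonneg.2 (Pf_pos hε one_mem x).le)

/-- Regularized 3D Hardy inequality, sqrt form. -/
lemma hardy_sqrt {ε : ℝ} (hε : 0 < ε) {f : E3 → ℝ}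
    (hf : ContDiff ℝ 1 f) (hfc : HasCompactSupport f) :
    Real.sqrt (∫ x, f x ^ 2 * (Pf 1 ε x)⁻¹)
      ≤ 2 * Real.sqrt (∫ x, ∑ j, (fderiv ℝ f x (EuclideanSpace.single j 1)) ^ 2) := by
  have hk := key hε one_mem hf hfc
  have hsum : (∑ i, (1 : Fin 3 → ℝ) i) = 3 := by
    rw [Fin.sum_univ_three]; norm_num
  rw [hsum, af_one_eq hε] at hk
  set H := ∫ x, f x ^ 2 * (Pf 1 ε x)⁻¹ with hH
  set G := ∫ x, ∑ j, (fderiv ℝ f x (EuclideanSpace.single j 1)) ^ 2 with hG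
  have hH0 : 0 ≤ H := H_nonneg hε f
  have hG0 : 0 ≤ G := integral_gradsq_nonneg f
  have hkey : H ≤ 2 * Real.sqrt H * Real.sqrt G := by
    have : (3 - 1 : ℝ) * H ≤ H + 2 * Real.sqrt H * Real.sqrt G := hk
    linarith
  have hsH : Real.sqrt H ^ 2 = H := Real.sq_sqrt hH0
  by_cases h0 : Real.sqrt H = 0
  · rw [h0]
    positivity
  · have h1 : 0 < Real.sqrt H := lt_of_le_of_ne (Real.sqrt_nonneg _) (Ne.symm h0)
    nlinarith [Real.sqrt_nonneg G]

/-- Regularized mixed Hardy inequality. -/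
lemma mixed {ε : ℝ} (hε : 0 < ε) {f : E3 → ℝ}
    (hf : ContDiff ℝ 1 f) (hfc : HasCompactSupport f) :
    ∫ x, f x ^ 2 * af km ε x
      ≤ 8 * ∫ x, ∑ j, (fderiv ℝ f x (EuclideanSpace.single j 1)) ^ 2 := by
  have hk := key hε km_mem hf hfc
  have hsum : (∑ i, km i) = 2 := by
    rw [Fin.sum_univ_three]
    unfold km
    norm_num
  rw [hsum] at hk
  set H := ∫ x, f x ^ 2 * (Pf 1 ε x)⁻¹ with hH
  set G := ∫ x, ∑ j, (fderiv ℝ f x (EuclideanSpace.single j 1)) ^ 2 with hG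
  have hH0 : 0 ≤ H := H_nonneg hε f
  have hG0 : 0 ≤ G := integral_gradsq_nonneg f
  have hs := hardy_sqrt hε hf hfc
  rw [← hH, ← hG] at hs
  have hsH : Real.sqrt H ^ 2 = H := Real.sq_sqrt hH0
  have hsG : Real.sqrt G ^ 2 = G := Real.sq_sqrt hG0
  have h1 : (2 - 1 : ℝ) * (∫ x, f x ^ 2 * af km ε x) ≤ H + 2 * Real.sqrt H * Real.sqrt G := hk
  nlinarith [Real.sqrt_nonneg H, Real.sqrt_nonneg G,
    mul_le_mul_of_nonneg_right hs (Real.sqrt_nonneg G)]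

/-- Component functions of a `C¹` compactly supported vector field. -/
lemma comp_contDiff {v : E3 → E3} (hv : ContDiff ℝ 1 v) (i : Fin 3) :
    ContDiff ℝ 1 (fun x => v x i) :=
  (EuclideanSpace.proj i (𝕜 := ℝ)).contDiff.comp hv

lemma comp_hcs {v : E3 → E3} (hvc : HasCompactSupport v) (i : Fin 3) :
    HasCompactSupport (fun x => v x i) :=
  hvc.comp_left (g := fun y : E3 => y i) rfl

lemma comp_fderiv {v : E3 → E3} (hv : ContDiff ℝ 1 v) (i : Fin 3) (x u : E3) :
    fderiv ℝ (fun y => v y i) x u = fderiv ℝ v x u i := by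
  have hD : HasFDerivAt (fun y => v y i)
      ((EuclideanSpace.proj i (𝕜 := ℝ)).comp (fderiv ℝ v x)) x :=
    ((EuclideanSpace.proj i (𝕜 := ℝ)).hasFDerivAt).comp x
      ((hv.differentiable one_ne_zero) x).hasFDerivAt
  rw [hD.fderiv]
  rfl

lemma norm_sq_eq (y : E3) : ‖y‖ ^ 2 = ∑ i, y i ^ 2 := by
  rw [EuclideanSpace.norm_eq, Real.sq_sqrt (Finset.sum_nonneg fun i _ => sq_nonneg _)]
  congr 1; ext i; rw [Real.norm_eq_abs, sq_abs]

/-- Vector-field version of the mixed Hardy inequality. -/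
lemma vec {ε : ℝ} (hε : 0 < ε) {v : E3 → E3}
    (hv : ContDiff ℝ 1 v) (hvc : HasCompactSupport v) :
    ∫ x, ‖v x‖ ^ 2 * af km ε x ≤ 8 * ∫ x, hsNorm v x ^ 2 := by
  have hint : ∀ i : Fin 3, Integrable (fun x => v x i ^ 2 * af km ε x) volume := by
    intro i
    apply Continuous.integrable_of_hasCompactSupport
    · exact ((comp_contDiff hv i).continuous.pow 2).mul (af_cont hε km_mem)
    · apply HasCompactSupport.mul_right
      have := (comp_hcs hvc i).mul_right (f' := fun x => v x i)
      simpa [pow_two, Pi.mul_def] using this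
  have hgint : ∀ i : Fin 3, Integrable
      (fun x => ∑ j, (fderiv ℝ v x (EuclideanSpace.single j 1) i) ^ 2) volume := by
    intro i
    have e : (fun x => ∑ j, (fderiv ℝ v x (EuclideanSpace.single j 1) i) ^ 2)
        = fun x => ∑ j, (fderiv ℝ (fun y => v y i) x (EuclideanSpace.single j 1)) ^ 2 := by
      ext x
      exact Finset.sum_congr rfl fun j _ => by rw [comp_fderiv hv i]
    rw [e]
    apply Continuous.integrable_of_hasCompactSupport
    · exact continuous_finset_sum _ fun j _ =>
        (cont_fderiv_apply (comp_contDiff hv i) _).pow 2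
    · have h1 : ∀ j : Fin 3, HasCompactSupport
          fun x => (fderiv ℝ (fun y => v y i) x (EuclideanSpace.single j 1)) ^ 2 := by
        intro j
        have := (hcs_fderiv_apply (comp_hcs hvc i) (EuclideanSpace.single j 1)).mul_right
          (f' := fun x => fderiv ℝ (fun y => v y i) x (EuclideanSpace.single j 1))
        simpa [pow_two, Pi.mul_def] using this
      have e2 : (fun x => ∑ j : Fin 3,
          (fderiv ℝ (fun y => v y i) x (EuclideanSpace.single j 1)) ^ 2)
          = fun x => (fderiv ℝ (fun y => v y i) x (EuclideanSpace.single 0 1)) ^ 2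
            + (fderiv ℝ (fun y => v y i) x (EuclideanSpace.single 1 1)) ^ 2
            + (fderiv ℝ (fun y => v y i) x (EuclideanSpace.single 2 1)) ^ 2 := by
        ext x; rw [Fin.sum_univ_three]
      rw [e2]
      exact ((h1 0).add (h1 1)).add (h1 2)
  calc ∫ x, ‖v x‖ ^ 2 * af km ε x
      = ∫ x, ∑ i, v x i ^ 2 * af km ε x := by
        congr 1; ext x
        rw [norm_sq_eq, Finset.sum_mul]
    _ = ∑ i, ∫ x, v x i ^ 2 * af km ε x := integral_finset_sum _ fun i _ => hint i
    _ ≤ ∑ i : Fin 3, 8 * ∫ x, ∑ j, (fderiv ℝ v x (EuclideanSpace.single j 1) i) ^ 2 := by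
        apply Finset.sum_le_sum
        intro i _
        have h := mixed hε (comp_contDiff hv i) (comp_hcs hvc i)
        have e : (∫ x, ∑ j, (fderiv ℝ (fun y => v y i) x (EuclideanSpace.single j 1)) ^ 2)
            = ∫ x, ∑ j, (fderiv ℝ v x (EuclideanSpace.single j 1) i) ^ 2 := by
          congr 1; ext x
          exact Finset.sum_congr rfl fun j _ => by rw [comp_fderiv hv i]
        rw [e] at h
        exact h
    _ = 8 * ∫ x, hsNorm v x ^ 2 := by
        rw [← Finset.mul_sum, ← integral_finset_sum _ fun i _ => hgint i]
        congr 1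
        congr 1; ext x
        rw [hsNorm, Real.sq_sqrt (Finset.sum_nonneg fun i _ =>
          Finset.sum_nonneg fun j _ => sq_nonneg _)]


lemma hs_nonneg (v : E3 → E3) : 0 ≤ ∫ x, hsNorm v x ^ 2 :=
  integral_nonneg fun x => sq_nonneg _

/-- Weighted Cauchy–Schwarz + mixed Hardy, vector version. -/
lemma vecCS {ε : ℝ} (hε : 0 < ε) {v w : E3 → E3}
    (hv : ContDiff ℝ 1 v) (hvc : HasCompactSupport v)
    (hw : ContDiff ℝ 1 w) (hwc : HasCompactSupport w) :
    ∫ x, (‖v x‖ * ‖w x‖) * af km ε x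
      ≤ 8 * Real.sqrt (∫ x, hsNorm v x ^ 2) * Real.sqrt (∫ x, hsNorm w x ^ 2) := by
  set F : E3 → ℝ := fun x => ‖v x‖ * Real.sqrt (af km ε x) with hF
  set G : E3 → ℝ := fun x => ‖w x‖ * Real.sqrt (af km ε x) with hG
  have ha0 : ∀ x, 0 < af km ε x := af_pos hε km_mem
  have hFc : Continuous F := (hv.continuous.norm).mul ((af_cont hε km_mem).sqrt)
  have hGc : Continuous G := (hw.continuous.norm).mul ((af_cont hε km_mem).sqrt)
  have hFcs : HasCompactSupport F := (hvc.norm).mul_right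
  have hGcs : HasCompactSupport G := (hwc.norm).mul_right
  have hcs := csInt hFc hGc hFcs hGcs
    (fun x => mul_nonneg (norm_nonneg _) (Real.sqrt_nonneg _))
    (fun x => mul_nonneg (norm_nonneg _) (Real.sqrt_nonneg _))
  have hFG : (∫ x, F x * G x) = ∫ x, (‖v x‖ * ‖w x‖) * af km ε x := by
    congr 1; ext x
    have e : F x * G x = ‖v x‖ * ‖w x‖ * (Real.sqrt (af km ε x) * Real.sqrt (af km ε x)) := by
      rw [hF, hG]; ring
    rw [e, Real.mul_self_sqrt (ha0 x).le]
  have hF2 : (∫ x, F x ^ 2) = ∫ x, ‖v x‖ ^ 2 * af km ε x := by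
    congr 1; ext x
    rw [hF, mul_pow, Real.sq_sqrt (ha0 x).le]
  have hG2 : (∫ x, G x ^ 2) = ∫ x, ‖w x‖ ^ 2 * af km ε x := by
    congr 1; ext x
    rw [hG, mul_pow, Real.sq_sqrt (ha0 x).le]
  rw [hFG, hF2, hG2] at hcs
  have h8v : Real.sqrt (∫ x, ‖v x‖ ^ 2 * af km ε x)
      ≤ Real.sqrt 8 * Real.sqrt (∫ x, hsNorm v x ^ 2) := by
    rw [← Real.sqrt_mul (by norm_num : (0:ℝ) ≤ 8)]
    exact Real.sqrt_le_sqrt (vec hε hv hvc)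
  have h8w : Real.sqrt (∫ x, ‖w x‖ ^ 2 * af km ε x)
      ≤ Real.sqrt 8 * Real.sqrt (∫ x, hsNorm w x ^ 2) := by
    rw [← Real.sqrt_mul (by norm_num : (0:ℝ) ≤ 8)]
    exact Real.sqrt_le_sqrt (vec hε hw hwc)
  have hmul : Real.sqrt (∫ x, ‖v x‖ ^ 2 * af km ε x)
        * Real.sqrt (∫ x, ‖w x‖ ^ 2 * af km ε x)
      ≤ (Real.sqrt 8 * Real.sqrt (∫ x, hsNorm v x ^ 2))
        * (Real.sqrt 8 * Real.sqrt (∫ x, hsNorm w x ^ 2)) :=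
    mul_le_mul h8v h8w (Real.sqrt_nonneg _) (by positivity)
  have e8 : (Real.sqrt 8 * Real.sqrt (∫ x, hsNorm v x ^ 2))
        * (Real.sqrt 8 * Real.sqrt (∫ x, hsNorm w x ^ 2))
      = 8 * Real.sqrt (∫ x, hsNorm v x ^ 2) * Real.sqrt (∫ x, hsNorm w x ^ 2) := by
    have : Real.sqrt 8 * Real.sqrt 8 = 8 := Real.mul_self_sqrt (by norm_num)
    calc (Real.sqrt 8 * Real.sqrt (∫ x, hsNorm v x ^ 2))
          * (Real.sqrt 8 * Real.sqrt (∫ x, hsNorm w x ^ 2))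
        = (Real.sqrt 8 * Real.sqrt 8) * Real.sqrt (∫ x, hsNorm v x ^ 2)
          * Real.sqrt (∫ x, hsNorm w x ^ 2) := by ring
      _ = 8 * Real.sqrt (∫ x, hsNorm v x ^ 2) * Real.sqrt (∫ x, hsNorm w x ^ 2) := by rw [this]
  linarith [hcs, hmul, le_of_eq e8]

/-- Pointwise bound for the integrand in terms of the HS norm. -/
lemma ptbound (U v w : E3 → E3) (x : E3) :
    |∑ i, fderiv ℝ U x (v x) i * w x i| ≤ hsNorm U x * (‖v x‖ * ‖w x‖) := by
  classical
  set a : Fin 3 → Fin 3 → ℝ := fun i j => fderiv ℝ U x (EuclideanSpace.single j 1) i with ha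
  set c : Fin 3 → ℝ := fun j => v x j with hc
  have hdec : ∀ i, fderiv ℝ U x (v x) i = ∑ j, c j * a i j := by
    intro i
    have hvx : v x = ∑ j, c j • EuclideanSpace.single j (1:ℝ) := by
      ext k
      rw [Fin.sum_univ_three]
      simp [EuclideanSpace.single_apply, hc]
      fin_cases k <;> simp
    calc fderiv ℝ U x (v x) i
        = fderiv ℝ U x (∑ j, c j • EuclideanSpace.single j 1) i := by rw [← hvx]
      _ = (∑ j, c j • fderiv ℝ U x (EuclideanSpace.single j 1)) i := by
          have e : fderiv ℝ U x (∑ j, c j • EuclideanSpace.single j (1:ℝ))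
              = ∑ j, c j • fderiv ℝ U x (EuclideanSpace.single j 1) := by
            rw [map_sum]
            exact Finset.sum_congr rfl fun j _ =>
              (fderiv ℝ U x).map_smul (c j) (EuclideanSpace.single j 1)
          rw [e]
      _ = ∑ j, c j * a i j := by
          rw [Fin.sum_univ_three, Fin.sum_univ_three]
          simp [ha]
  have h1 : (∑ i, fderiv ℝ U x (v x) i * w x i) ^ 2
      ≤ (∑ i, (fderiv ℝ U x (v x) i) ^ 2) * (∑ i, w x i ^ 2) :=
    Finset.sum_mul_sq_le_sq_mul_sq _ _ _
  have h2 : (∑ i, (fderiv ℝ U x (v x) i) ^ 2)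
      ≤ (∑ i, ∑ j, a i j ^ 2) * (∑ j, c j ^ 2) := by
    rw [Finset.sum_mul]
    apply Finset.sum_le_sum
    intro i _
    rw [hdec i]
    calc (∑ j, c j * a i j) ^ 2 ≤ (∑ j, c j ^ 2) * (∑ j, a i j ^ 2) :=
          Finset.sum_mul_sq_le_sq_mul_sq _ _ _
      _ = (∑ j, a i j ^ 2) * (∑ j, c j ^ 2) := by ring
  have hw0 : (0:ℝ) ≤ ∑ i, w x i ^ 2 := Finset.sum_nonneg fun i _ => sq_nonneg _
  have hc0 : (0:ℝ) ≤ ∑ j, c j ^ 2 := Finset.sum_nonneg fun j _ => sq_nonneg _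
  have ha0 : (0:ℝ) ≤ ∑ i, ∑ j, a i j ^ 2 :=
    Finset.sum_nonneg fun i _ => Finset.sum_nonneg fun j _ => sq_nonneg _
  have h3 : (∑ i, fderiv ℝ U x (v x) i * w x i) ^ 2
      ≤ ((∑ i, ∑ j, a i j ^ 2) * (∑ j, c j ^ 2)) * (∑ i, w x i ^ 2) :=
    le_trans h1 (mul_le_mul_of_nonneg_right h2 hw0)
  have hnv : Real.sqrt (∑ j, c j ^ 2) = ‖v x‖ := by
    rw [show (∑ j, c j ^ 2) = ∑ j, v x j ^ 2 from rfl, ← norm_sq_eq]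
    exact Real.sqrt_sq (norm_nonneg _)
  have hnw : Real.sqrt (∑ i, w x i ^ 2) = ‖w x‖ := by
    rw [← norm_sq_eq]
    exact Real.sqrt_sq (norm_nonneg _)
  calc |∑ i, fderiv ℝ U x (v x) i * w x i|
      = Real.sqrt ((∑ i, fderiv ℝ U x (v x) i * w x i) ^ 2) := (Real.sqrt_sq_eq_abs _).symm
    _ ≤ Real.sqrt (((∑ i, ∑ j, a i j ^ 2) * (∑ j, c j ^ 2)) * (∑ i, w x i ^ 2)) :=
        Real.sqrt_le_sqrt h3
    _ = hsNorm U x * (‖v x‖ * ‖w x‖) := by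
        rw [Real.sqrt_mul (mul_nonneg ha0 hc0), Real.sqrt_mul ha0, hnv, hnw]
        rw [hsNorm]
        ring


lemma axis_null : volume {x : E3 | x 0 = 0 ∧ x 1 = 0} = 0 := by
  set L : E3 →L[ℝ] ℝ := EuclideanSpace.proj 0 (𝕜 := ℝ) with hL
  have hsub : {x : E3 | x 0 = 0 ∧ x 1 = 0} ⊆ ((LinearMap.ker (L : E3 →ₗ[ℝ] ℝ) : Submodule ℝ E3) : Set E3) := by
    intro x hx
    have : L x = 0 := hx.1
    exact this
  have hne : (LinearMap.ker (L : E3 →ₗ[ℝ] ℝ) : Submodule ℝ E3) ≠ ⊤ := by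
    intro h
    have h1 : EuclideanSpace.single 0 (1:ℝ) ∈ LinearMap.ker (L : E3 →ₗ[ℝ] ℝ) := by rw [h]; trivial
    have h2 : L (EuclideanSpace.single 0 (1:ℝ)) = 0 := h1
    have h3 : L (EuclideanSpace.single 0 (1:ℝ)) = 1 := by
      simp [hL, EuclideanSpace.single_apply]
    rw [h3] at h2
    exact one_ne_zero h2
  exact measure_mono_null hsub (Measure.addHaar_submodule _ _ hne)

lemma sum_one_sq (x : E3) : (∑ i, (1 : Fin 3 → ℝ) i * x i ^ 2) = ‖x‖ ^ 2 := by
  rw [norm_sq_eq]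
  exact Finset.sum_congr rfl fun i _ => one_mul _

lemma sum_km_sq (x : E3) : (∑ i, km i * x i ^ 2) = x 0 ^ 2 + x 1 ^ 2 := by
  rw [Fin.sum_univ_three]
  unfold km
  norm_num

lemma prime_pos {x : E3} (hx : ¬(x 0 = 0 ∧ x 1 = 0)) : 0 < primeNorm3 x := by
  rw [primeNorm3]
  apply Real.sqrt_pos.2
  rcases not_and_or.mp hx with h | h
  · positivity
  · positivity

lemma norm_pos3 {x : E3} (hx : ¬(x 0 = 0 ∧ x 1 = 0)) : 0 < ‖x‖ := by
  apply norm_pos_iff.2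
  intro h0
  apply hx
  rw [h0]
  exact ⟨rfl, rfl⟩

lemma eps_tendsto : Filter.Tendsto (fun n : ℕ => ((n : ℝ) + 1)⁻¹) Filter.atTop (nhds 0) := by
  have := tendsto_one_div_add_atTop_nhds_zero_nat (𝕜 := ℝ)
  simpa [one_div] using this

lemma weight_limit {x : E3} (hx : ¬(x 0 = 0 ∧ x 1 = 0)) :
    Filter.Tendsto (fun n : ℕ => af km ((n : ℝ) + 1)⁻¹ x) Filter.atTop
      (nhds ((‖x‖ * primeNorm3 x)⁻¹)) := by
  have hε2 : Filter.Tendsto (fun n : ℕ => (((n : ℝ) + 1)⁻¹) ^ 2) Filter.atTop (nhds 0) := by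
    have := eps_tendsto.mul eps_tendsto
    simpa [pow_two] using this
  have hQ : Filter.Tendsto (fun n : ℕ => Pf 1 ((n : ℝ) + 1)⁻¹ x) Filter.atTop
      (nhds (‖x‖ ^ 2)) := by
    have h1 : Filter.Tendsto (fun n : ℕ => Pf 1 ((n : ℝ) + 1)⁻¹ x) Filter.atTop
        (nhds ((∑ i, (1 : Fin 3 → ℝ) i * x i ^ 2) + 0)) :=
      tendsto_const_nhds.add hε2
    rw [add_zero, sum_one_sq] at h1
    exact h1
  have hP : Filter.Tendsto (fun n : ℕ => Pf km ((n : ℝ) + 1)⁻¹ x) Filter.atTop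
      (nhds (primeNorm3 x ^ 2)) := by
    have h1 : Filter.Tendsto (fun n : ℕ => Pf km ((n : ℝ) + 1)⁻¹ x) Filter.atTop
        (nhds ((∑ i, km i * x i ^ 2) + 0)) :=
      tendsto_const_nhds.add hε2
    rw [add_zero, sum_km_sq] at h1
    have e : primeNorm3 x ^ 2 = x 0 ^ 2 + x 1 ^ 2 := by
      rw [primeNorm3]
      exact Real.sq_sqrt (by positivity)
    rw [e]
    exact h1
  have hb : Filter.Tendsto (fun n : ℕ => Real.sqrt (Pf 1 ((n : ℝ) + 1)⁻¹ x)
      * Real.sqrt (Pf km ((n : ℝ) + 1)⁻¹ x)) Filter.atTop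
      (nhds (‖x‖ * primeNorm3 x)) := by
    have h1 := (hQ.sqrt).mul (hP.sqrt)
    rw [Real.sqrt_sq (norm_nonneg x), Real.sqrt_sq (prime_pos hx).le] at h1
    exact h1
  have hne : ‖x‖ * primeNorm3 x ≠ 0 := by
    have := norm_pos3 hx
    have := prime_pos hx
    positivity
  exact hb.inv₀ hne

lemma af_mono_n (x : E3) : Monotone fun n : ℕ => af km ((n : ℝ) + 1)⁻¹ x := by
  intro m n hmn
  have hm : (0:ℝ) < ((m : ℝ) + 1)⁻¹ := by positivity
  have hn : (0:ℝ) < ((n : ℝ) + 1)⁻¹ := by positivity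
  have he : ((n : ℝ) + 1)⁻¹ ≤ ((m : ℝ) + 1)⁻¹ := by
    apply inv_anti₀
    · positivity
    · have : (m : ℝ) ≤ (n : ℝ) := Nat.cast_le.2 hmn
      linarith
  have hPf : ∀ κ, (∀ i, κ i = 0 ∨ κ i = 1) →
      Pf κ ((n : ℝ) + 1)⁻¹ x ≤ Pf κ ((m : ℝ) + 1)⁻¹ x := by
    intro κ hκ
    unfold Pf
    have : (((n : ℝ) + 1)⁻¹) ^ 2 ≤ (((m : ℝ) + 1)⁻¹) ^ 2 := by
      apply pow_le_pow_left₀ hn.le he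
    linarith
  have h1 := hPf 1 one_mem
  have h2 := hPf km km_mem
  have hQn := Pf_pos hn one_mem x
  have hPn := Pf_pos hn km_mem x
  have hbn : 0 < Real.sqrt (Pf 1 ((n : ℝ) + 1)⁻¹ x) * Real.sqrt (Pf km ((n : ℝ) + 1)⁻¹ x) := by
    positivity
  unfold af
  apply inv_anti₀ hbn
  exact mul_le_mul (Real.sqrt_le_sqrt h1) (Real.sqrt_le_sqrt h2)
    (Real.sqrt_nonneg _) (Real.sqrt_nonneg _)

end Stmt3Aux

end Stmt3Aux

open Stmt3Aux in
/-- There is `C > 0` such that: if `U` is `C¹` off the axis `{x' = 0}` with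
`|∇U(x)| ≤ A/(|x||x'|)`, then for all `C¹` compactly supported `v, w : ℝ³ → ℝ³`,
`|∫ ((v·∇)U)·w| ≤ C A ‖∇v‖_{L²} ‖∇w‖_{L²}`. -/
theorem stmt3 :
    ∃ C > 0, ∀ A : ℝ, 0 < A →
      ∀ U : EuclideanSpace ℝ (Fin 3) → EuclideanSpace ℝ (Fin 3),
        ContDiffOn ℝ 1 U {x | ¬(x 0 = 0 ∧ x 1 = 0)} →
        (∀ x : EuclideanSpace ℝ (Fin 3), ¬(x 0 = 0 ∧ x 1 = 0) →
          hsNorm U x ≤ A / (‖x‖ * primeNorm3 x)) →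
        ∀ v w : EuclideanSpace ℝ (Fin 3) → EuclideanSpace ℝ (Fin 3),
          ContDiff ℝ 1 v → HasCompactSupport v →
          ContDiff ℝ 1 w → HasCompactSupport w →
          |∫ x, ∑ i : Fin 3, fderiv ℝ U x (v x) i * w x i|
            ≤ C * A * Real.sqrt (∫ x, hsNorm v x ^ 2) * Real.sqrt (∫ x, hsNorm w x ^ 2) := by
  refine ⟨8, by norm_num, ?_⟩
  intro A hA U _hU hUb v w hv hvc hw hwc
  set Dv := ∫ x, hsNorm v x ^ 2 with hDv
  set Dw := ∫ x, hsNorm w x ^ 2 with hDw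
  set B : ℝ := 8 * A * Real.sqrt Dv * Real.sqrt Dw with hB
  have hB0 : 0 ≤ B := by
    rw [hB]
    have h1 : (0:ℝ) ≤ 8 * A := by linarith
    exact mul_nonneg (mul_nonneg h1 (Real.sqrt_nonneg _)) (Real.sqrt_nonneg _)
  have hgn_int : ∀ n : ℕ, Integrable
      (fun x : E3 => (A * (‖v x‖ * ‖w x‖)) * af km ((n : ℝ) + 1)⁻¹ x) volume := by
    intro n
    have hε : (0:ℝ) < ((n : ℝ) + 1)⁻¹ := by positivity
    apply Continuous.integrable_of_hasCompactSupport
    · exact (continuous_const.mul ((hv.continuous.norm).mul (hw.continuous.norm))).mul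
        (af_cont hε km_mem)
    · exact ((hvc.norm.mul_right).mul_left).mul_right
  have hgn_le : ∀ n : ℕ,
      (∫ x : E3, (A * (‖v x‖ * ‖w x‖)) * af km ((n : ℝ) + 1)⁻¹ x) ≤ B := by
    intro n
    have hε : (0:ℝ) < ((n : ℝ) + 1)⁻¹ := by positivity
    have h1 := vecCS hε hv hvc hw hwc
    have e : (fun x : E3 => (A * (‖v x‖ * ‖w x‖)) * af km ((n : ℝ) + 1)⁻¹ x)
        = fun x : E3 => A * ((‖v x‖ * ‖w x‖) * af km ((n : ℝ) + 1)⁻¹ x) := by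
      ext x; ring
    rw [e, integral_const_mul]
    calc A * ∫ x : E3, (‖v x‖ * ‖w x‖) * af km ((n : ℝ) + 1)⁻¹ x
        ≤ A * (8 * Real.sqrt Dv * Real.sqrt Dw) := mul_le_mul_of_nonneg_left h1 hA.le
      _ = B := by rw [hB]; ring
  have hae : ∀ᵐ x : E3, ENNReal.ofReal |∑ i, fderiv ℝ U x (v x) i * w x i|
      ≤ ⨆ n : ℕ, ENNReal.ofReal ((A * (‖v x‖ * ‖w x‖)) * af km ((n : ℝ) + 1)⁻¹ x) := by
    have h0 : ∀ᵐ x : E3, ¬(x 0 = 0 ∧ x 1 = 0) := by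
      rw [MeasureTheory.ae_iff]
      simp only [not_not]
      exact axis_null
    filter_upwards [h0] with x hx
    have hr : |∑ i, fderiv ℝ U x (v x) i * w x i|
        ≤ (A * (‖v x‖ * ‖w x‖)) * (‖x‖ * primeNorm3 x)⁻¹ := by
      have h1 := ptbound U v w x
      have h2 := hUb x hx
      have h3 : hsNorm U x * (‖v x‖ * ‖w x‖)
          ≤ (A / (‖x‖ * primeNorm3 x)) * (‖v x‖ * ‖w x‖) :=
        mul_le_mul_of_nonneg_right h2 (by positivity)
      calc |∑ i, fderiv ℝ U x (v x) i * w x i|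
          ≤ hsNorm U x * (‖v x‖ * ‖w x‖) := h1
        _ ≤ (A / (‖x‖ * primeNorm3 x)) * (‖v x‖ * ‖w x‖) := h3
        _ = (A * (‖v x‖ * ‖w x‖)) * (‖x‖ * primeNorm3 x)⁻¹ := by
            rw [div_eq_mul_inv]; ring
    have hc0 : (0:ℝ) ≤ A * (‖v x‖ * ‖w x‖) :=
      mul_nonneg hA.le (mul_nonneg (norm_nonneg _) (norm_nonneg _))
    have hmono : Monotone fun n : ℕ =>
        ENNReal.ofReal ((A * (‖v x‖ * ‖w x‖)) * af km ((n : ℝ) + 1)⁻¹ x) := by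
      intro m n hmn
      apply ENNReal.ofReal_le_ofReal
      exact mul_le_mul_of_nonneg_left (af_mono_n x hmn) hc0
    have htend : Filter.Tendsto (fun n : ℕ =>
        ENNReal.ofReal ((A * (‖v x‖ * ‖w x‖)) * af km ((n : ℝ) + 1)⁻¹ x)) Filter.atTop
        (nhds (ENNReal.ofReal ((A * (‖v x‖ * ‖w x‖)) * (‖x‖ * primeNorm3 x)⁻¹))) := by
      apply Filter.Tendsto.comp (ENNReal.continuous_ofReal.tendsto _)
      exact tendsto_const_nhds.mul (weight_limit hx)
    have hsup := tendsto_nhds_unique htend (tendsto_atTop_iSup hmono)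
    calc ENNReal.ofReal |∑ i, fderiv ℝ U x (v x) i * w x i|
        ≤ ENNReal.ofReal ((A * (‖v x‖ * ‖w x‖)) * (‖x‖ * primeNorm3 x)⁻¹) :=
          ENNReal.ofReal_le_ofReal hr
      _ = ⨆ n : ℕ, ENNReal.ofReal ((A * (‖v x‖ * ‖w x‖)) * af km ((n : ℝ) + 1)⁻¹ x) := hsup
  have hlin : (∫⁻ x : E3, ENNReal.ofReal |∑ i, fderiv ℝ U x (v x) i * w x i|)
      ≤ ENNReal.ofReal B := by
    calc (∫⁻ x : E3, ENNReal.ofReal |∑ i, fderiv ℝ U x (v x) i * w x i|)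
        ≤ ∫⁻ x : E3, ⨆ n : ℕ, ENNReal.ofReal
            ((A * (‖v x‖ * ‖w x‖)) * af km ((n : ℝ) + 1)⁻¹ x) := lintegral_mono_ae hae
      _ = ⨆ n : ℕ, ∫⁻ x : E3, ENNReal.ofReal
            ((A * (‖v x‖ * ‖w x‖)) * af km ((n : ℝ) + 1)⁻¹ x) := by
          apply lintegral_iSup
          · intro n
            have hε : (0:ℝ) < ((n : ℝ) + 1)⁻¹ := by positivity
            exact ((continuous_const.mul ((hv.continuous.norm).mul
              (hw.continuous.norm))).mul (af_cont hε km_mem)).measurable.ennreal_ofReal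
          · intro m n hmn x
            apply ENNReal.ofReal_le_ofReal
            exact mul_le_mul_of_nonneg_left (af_mono_n x hmn)
              (mul_nonneg hA.le (mul_nonneg (norm_nonneg _) (norm_nonneg _)))
      _ ≤ ENNReal.ofReal B := by
          apply iSup_le
          intro n
          have hε : (0:ℝ) < ((n : ℝ) + 1)⁻¹ := by positivity
          rw [← MeasureTheory.ofReal_integral_eq_lintegral_ofReal (hgn_int n)
            (Filter.Eventually.of_forall fun x => ?_)]
          · exact ENNReal.ofReal_le_ofReal (hgn_le n)
          · exact mul_nonneg (mul_nonneg hA.le (mul_nonneg (norm_nonneg _) (norm_nonneg _)))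
              (af_pos hε km_mem x).le
  have hfin := MeasureTheory.norm_integral_le_lintegral_norm (μ := volume)
    (f := fun x : E3 => ∑ i, fderiv ℝ U x (v x) i * w x i)
  simp only [Real.norm_eq_abs] at hfin
  calc |∫ x : E3, ∑ i, fderiv ℝ U x (v x) i * w x i|
      ≤ (∫⁻ x : E3, ENNReal.ofReal |∑ i, fderiv ℝ U x (v x) i * w x i|).toReal := hfin
    _ ≤ B := ENNReal.toReal_le_of_le_ofReal hB0 hlin
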